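/- Let ρ, ψ, δ : ℝ → ℝ be C¹ functions, each periodic with period p > 0, satisfying ρ' + ψρ = δ on ℝ. If δ(t) ≠ 0 for all t ∈ ℝ, then ρ(t) ≠ 0 for all t ∈ ℝ. -/

import Mathlib

open Set Filter Topology

lemma sign_const_neg (f : ℝ → ℝ) (hf : Continuous f) (h : ∀ t, f t ≠ 0)
    (a : ℝ) (ha : f a < 0) : ∀ t, f t < 0 := by
  intro t
  rcases lt_or_gt_of_ne (h t) with h' | h'
  · exact h'
  · exfalso
    have h0 : (0:ℝ) ∈ Set.uIcc (f a) (f t) := Set.mem_uIcc.2 (Or.inl ⟨ha.le, h'.le⟩)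
    obtain ⟨c, _, hc⟩ := intermediate_value_uIcc hf.continuousOn h0
    exact h c hc

lemma key_lemma (p : ℝ) (hp : 0 < p) (ρ δ : ℝ → ℝ) (hc : Continuous ρ)
    (hρp : Function.Periodic ρ p) (hδpos : ∀ t, 0 < δ t)
    (hd : ∀ t, ρ t = 0 → HasDerivAt ρ (δ t) t) (t₀ : ℝ) (h0 : ρ t₀ = 0) : False := by
  -- slope near t₀ is eventually positive on the right, so ρ > 0 just after t₀
  have hslope : Tendsto (slope ρ t₀) (𝓝[≠] t₀) (𝓝 (δ t₀)) :=
    hasDerivAt_iff_tendsto_slope.mp (hd t₀ h0)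
  have hev : ∀ᶠ t in 𝓝[≠] t₀, 0 < slope ρ t₀ t :=
    hslope.eventually (eventually_gt_nhds (hδpos t₀))
  have hevr : ∀ᶠ t in 𝓝[>] t₀, 0 < ρ t := by
    have h1 : ∀ᶠ t in 𝓝[>] t₀, 0 < slope ρ t₀ t :=
      hev.filter_mono (nhdsWithin_mono _ (fun x hx => ne_of_gt hx))
    filter_upwards [h1, self_mem_nhdsWithin] with t ht ht'
    have hts : (0:ℝ) < t - t₀ := sub_pos.2 ht'
    have : slope ρ t₀ t = ρ t / (t - t₀) := by
      simp [slope_def_field, h0]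
    rw [this] at ht
    have := mul_pos ht hts
    rwa [div_mul_cancel₀ _ hts.ne'] at this
  obtain ⟨u, hu, hsub⟩ := mem_nhdsGT_iff_exists_Ioc_subset.mp hevr
  have hu' : t₀ < u := hu
  have hρp0 : ρ (t₀ + p) = 0 := by rw [hρp t₀]; exact h0
  -- u < t₀ + p, else ρ (t₀+p) > 0
  have hup : u < t₀ + p := by
    by_contra h'
    push_neg at h'
    have : 0 < ρ (t₀ + p) := hsub ⟨by linarith, h'⟩
    rw [hρp0] at this; exact lt_irrefl _ this
  -- first zero after u
  set Z : Set ℝ := Set.Icc u (t₀ + p) ∩ ρ ⁻¹' {0} with hZ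
  have hZclosed : IsClosed Z := isClosed_Icc.inter (isClosed_singleton.preimage hc)
  have hZne : Z.Nonempty := ⟨t₀ + p, ⟨hup.le, le_refl _⟩, hρp0⟩
  have hZbdd : BddBelow Z := ⟨u, fun x hx => hx.1.1⟩
  set s := sInf Z with hs
  have hsZ : s ∈ Z := hZclosed.csInf_mem hZne hZbdd
  have hus : u ≤ s := hsZ.1.1
  have hρs : ρ s = 0 := hsZ.2
  have ht₀s : t₀ < s := lt_of_lt_of_le hu' hus
  -- ρ > 0 on (t₀, s)
  have hpos : ∀ t ∈ Set.Ioo t₀ s, 0 < ρ t := by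
    intro t ⟨ht1, ht2⟩
    rcases le_or_gt t u with h' | h'
    · exact hsub ⟨ht1, h'⟩
    · by_contra hneg
      push_neg at hneg
      have hρu : 0 < ρ u := hsub ⟨hu', le_refl _⟩
      have h00 : (0:ℝ) ∈ Set.Icc (ρ t) (ρ u) := ⟨hneg, hρu.le⟩
      obtain ⟨c, hcmem, hc⟩ := intermediate_value_Icc' h'.le hc.continuousOn h00
      have hcZ : c ∈ Z := ⟨⟨hcmem.1, le_trans hcmem.2 (le_trans ht2.le hsZ.1.2)⟩, hc⟩
      have : s ≤ c := csInf_le hZbdd hcZ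
      linarith [hcmem.2]
  -- slope at s eventually positive on the left, so ρ < 0 just before s
  have hslope' : Tendsto (slope ρ s) (𝓝[≠] s) (𝓝 (δ s)) :=
    hasDerivAt_iff_tendsto_slope.mp (hd s hρs)
  have hev' : ∀ᶠ t in 𝓝[<] s, 0 < slope ρ s t :=
    (hslope'.eventually (eventually_gt_nhds (hδpos s))).filter_mono
      (nhdsWithin_mono _ (fun x hx => ne_of_lt hx))
  have hmem : Set.Ioo t₀ s ∈ 𝓝[<] s := Ioo_mem_nhdsLT_of_mem ⟨ht₀s, le_refl _⟩
  obtain ⟨t, ht1, ht2⟩ := (hev'.and (eventually_of_mem hmem (fun x hx => hx))).exists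
  have hts : t - s < 0 := sub_neg.2 ht2.2
  have hst : slope ρ s t = ρ t / (t - s) := by
    simp [slope_def_field, hρs]
  rw [hst] at ht1
  have hρt : ρ t < 0 := by
    by_contra h'
    push_neg at h'
    have : ρ t / (t - s) ≤ 0 := div_nonpos_iff.2 (Or.inl ⟨h', hts.le⟩)
    linarith
  exact absurd (hpos t ht2) (not_lt.2 hρt.le)

/-- Remark 6.2: if `ρ, ψ, δ : ℝ → ℝ` are `C¹` and periodic of period `p > 0`,
`ρ' + ψρ = δ` everywhere, and `δ` never vanishes, then `ρ` never vanishes. -/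
theorem stmt_6 (p : ℝ) (hp : 0 < p) (ρ ψ δ : ℝ → ℝ)
    (hρ : ContDiff ℝ 1 ρ) (hψ : ContDiff ℝ 1 ψ) (hδ : ContDiff ℝ 1 δ)
    (hρp : Function.Periodic ρ p) (hψp : Function.Periodic ψ p)
    (hδp : Function.Periodic δ p)
    (hode : ∀ t : ℝ, deriv ρ t + ψ t * ρ t = δ t)
    (hδ0 : ∀ t : ℝ, δ t ≠ 0) :
    ∀ t : ℝ, ρ t ≠ 0 := by
  intro t₀ h0
  have hdiff : Differentiable ℝ ρ := hρ.differentiable one_ne_zero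
  have hcont : Continuous ρ := hdiff.continuous
  have hd : ∀ t, ρ t = 0 → HasDerivAt ρ (δ t) t := by
    intro t ht
    have h1 : deriv ρ t = δ t := by have := hode t; rw [ht] at this; linarith
    exact h1 ▸ (hdiff t).hasDerivAt
  rcases lt_or_gt_of_ne (hδ0 0) with hneg | hpos
  · -- δ < 0 everywhere; apply key lemma to -ρ, -δ
    have hδneg : ∀ t, δ t < 0 := sign_const_neg δ (hδ.continuous) hδ0 0 hneg
    refine key_lemma p hp (fun t => -ρ t) (fun t => -δ t) hcont.neg
      (fun t => by simp [hρp t]) (fun t => by simpa using neg_pos.2 (hδneg t)) ?_ t₀ (by simp [h0])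
    intro t ht
    have ht' : ρ t = 0 := by simpa using ht
    exact (hd t ht').neg
  · have hδpos : ∀ t, 0 < δ t := by
      intro t
      rcases lt_or_gt_of_ne (hδ0 t) with h' | h'
      · exact absurd hpos (not_lt.2 (sign_const_neg δ hδ.continuous hδ0 t h' 0).le)
      · exact h'
    exact key_lemma p hp ρ δ hcont hρp hδpos hd t₀ h0
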